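/- For a symmetric block matrix A = [[A1, 0],[0, A2]] and a symmetric perturbation E = [[0, E1^T],[E1, 0]], if λ_i(A) is an eigenvalue of A1 whose distance to the spectrum of A2 is gap_i > 0, then |λ_i(A) - λ_i(A+E)| ≤ ‖E‖² / gap_i, where eigenvalues are ordered decreasingly and ‖·‖ is the operator norm. -/

import Mathlib

open scoped Matrix.Norms.L2Operator

section QuadPerturbAux

open Matrix Finset Module

variable {ι : Type*} [Fintype ι] [DecidableEq ι]

/-- Spectral subspace construction: given a "good" predicate `p` on indices, there is a
subspace of codimension at most `#(¬p)` on which the quadratic form diagonalizes over good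
indices only. -/
lemma spectral_subspace {M : Matrix ι ι ℝ} (hM : M.IsHermitian) (p : ι → Prop) [DecidablePred p] :
    ∃ V : Submodule ℝ (ι → ℝ),
      Fintype.card ι ≤ finrank ℝ V + (univ.filter fun j => ¬ p j).card ∧
      ∀ x ∈ V, ∃ y : ι → ℝ, (∀ j, ¬ p j → y j = 0) ∧ (y = 0 → x = 0) ∧
        x ⬝ᵥ x = ∑ j, y j * y j ∧ x ⬝ᵥ (M *ᵥ x) = ∑ j, hM.eigenvalues j * (y j * y j) := by
  classical
  set U : Matrix ι ι ℝ := (hM.eigenvectorUnitary : Matrix ι ι ℝ) with hU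
  have hUU : U * star U = 1 := (Matrix.mem_unitaryGroup_iff).mp hM.eigenvectorUnitary.2
  have hUU' : star U * U = 1 := (Matrix.mem_unitaryGroup_iff').mp hM.eigenvectorUnitary.2
  set L : (ι → ℝ) →ₗ[ℝ] ({j // ¬ p j} → ℝ) :=
    LinearMap.pi (fun j => (LinearMap.proj j.1).comp (Matrix.mulVecLin (star U))) with hL
  refine ⟨LinearMap.ker L, ?_, ?_⟩
  · have h1 := LinearMap.finrank_range_add_finrank_ker L
    have h2 : finrank ℝ (LinearMap.range L) ≤ Fintype.card {j // ¬ p j} := by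
      simpa [Module.finrank_fintype_fun_eq_card] using
        (Submodule.finrank_le (LinearMap.range L))
    have h3 : Fintype.card {j // ¬ p j} = (univ.filter fun j => ¬ p j).card :=
      Fintype.card_subtype _
    have h4 : finrank ℝ (ι → ℝ) = Fintype.card ι := Module.finrank_fintype_fun_eq_card ℝ
    omega
  · intro x hx
    set y : ι → ℝ := (star U) *ᵥ x with hy
    have hky : ∀ j, ¬ p j → y j = 0 := by
      intro j hj
      have := congrFun (LinearMap.mem_ker.mp hx)
      simpa [hL, LinearMap.pi_apply] using this ⟨j, hj⟩
    have hxy : U *ᵥ y = x := by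
      rw [hy, mulVec_mulVec, hUU, one_mulVec]
    refine ⟨y, hky, ?_, ?_, ?_⟩
    · intro h0
      rw [← hxy, h0, mulVec_zero]
    · -- x ⬝ᵥ x = ∑ y j ^ 2
      have hxvU : x ᵥ* U = y := by
        rw [hy, Matrix.star_eq_conjTranspose, conjTranspose_eq_transpose_of_trivial,
          mulVec_transpose]
      have : x ⬝ᵥ x = y ⬝ᵥ y := by
        calc x ⬝ᵥ x = (x ᵥ* (U * star U)) ⬝ᵥ x := by rw [hUU, vecMul_one]
          _ = ((x ᵥ* U) ᵥ* star U) ⬝ᵥ x := by rw [vecMul_vecMul]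
          _ = (x ᵥ* U) ⬝ᵥ (star U *ᵥ x) := (dotProduct_mulVec _ _ _).symm
          _ = y ⬝ᵥ y := by rw [hxvU, ← hy]
      rw [this, dotProduct]
    · -- quadratic form
      have hsp := hM.spectral_theorem
      have hxvU : x ᵥ* U = y := by
        rw [hy, Matrix.star_eq_conjTranspose, conjTranspose_eq_transpose_of_trivial,
          mulVec_transpose]
      calc x ⬝ᵥ (M *ᵥ x)
          = x ⬝ᵥ ((U * (Matrix.diagonal (RCLike.ofReal ∘ hM.eigenvalues)) * star U) *ᵥ x) := by
            exact congrArg (fun Z => x ⬝ᵥ (Z *ᵥ x)) hsp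
        _ = (x ᵥ* U) ⬝ᵥ ((Matrix.diagonal (RCLike.ofReal ∘ hM.eigenvalues)) *ᵥ y) := by
            rw [← mulVec_mulVec, ← mulVec_mulVec, dotProduct_mulVec, ← hy]
        _ = ∑ j, hM.eigenvalues j * (y j * y j) := by
            rw [hxvU, dotProduct]
            refine Finset.sum_congr rfl fun j _ => ?_
            rw [mulVec_diagonal]
            simp [mul_comm, mul_assoc, mul_left_comm]

/-- There is a subspace of dimension at least the number of eigenvalues `≥ c` on which the
quadratic form is `≥ c ‖x‖²`. -/
lemma ge_subspace {M : Matrix ι ι ℝ} (hM : M.IsHermitian) (c : ℝ) :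
    ∃ V : Submodule ℝ (ι → ℝ),
      (univ.filter fun j => c ≤ hM.eigenvalues j).card ≤ finrank ℝ V ∧
      ∀ x ∈ V, c * (x ⬝ᵥ x) ≤ x ⬝ᵥ (M *ᵥ x) := by
  classical
  obtain ⟨V, hcard, hQ⟩ := spectral_subspace hM (fun j => c ≤ hM.eigenvalues j)
  refine ⟨V, ?_, ?_⟩
  · have := Finset.card_filter_add_card_filter_not
      (s := (univ : Finset ι)) (p := fun j => c ≤ hM.eigenvalues j)
    rw [Finset.card_univ] at this
    omega
  · intro x hx
    obtain ⟨y, hy0, -, hdot, hQx⟩ := hQ x hx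
    have key : x ⬝ᵥ (M *ᵥ x) - c * (x ⬝ᵥ x) = ∑ j, (hM.eigenvalues j - c) * (y j * y j) := by
      rw [hQx, hdot, Finset.mul_sum, ← Finset.sum_sub_distrib]
      exact Finset.sum_congr rfl fun j _ => by ring
    have hnn : (0:ℝ) ≤ ∑ j, (hM.eigenvalues j - c) * (y j * y j) := by
      refine Finset.sum_nonneg fun j _ => ?_
      by_cases hj : c ≤ hM.eigenvalues j
      · exact mul_nonneg (by linarith) (mul_self_nonneg _)
      · rw [hy0 j hj]; simp
    linarith

/-- There is a subspace of codimension at most the number of eigenvalues `≥ c` on which the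
quadratic form is `< c ‖x‖²` for nonzero vectors. -/
lemma lt_subspace {M : Matrix ι ι ℝ} (hM : M.IsHermitian) (c : ℝ) :
    ∃ W : Submodule ℝ (ι → ℝ),
      Fintype.card ι ≤ finrank ℝ W + (univ.filter fun j => c ≤ hM.eigenvalues j).card ∧
      ∀ x ∈ W, x ≠ 0 → x ⬝ᵥ (M *ᵥ x) < c * (x ⬝ᵥ x) := by
  classical
  obtain ⟨W, hcard, hQ⟩ := spectral_subspace hM (fun j => hM.eigenvalues j < c)
  refine ⟨W, ?_, ?_⟩
  · have heq : (univ.filter fun j => ¬ hM.eigenvalues j < c)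
        = (univ.filter fun j => c ≤ hM.eigenvalues j) := by
      apply Finset.filter_congr; intro j _; simp [not_lt]
    rw [heq] at hcard; exact hcard
  · intro x hx hx0
    obtain ⟨y, hy0, hyx, hdot, hQx⟩ := hQ x hx
    have hyne : y ≠ 0 := fun h => hx0 (hyx h)
    obtain ⟨j0, hj0⟩ := Function.ne_iff.mp hyne
    have hj0lt : hM.eigenvalues j0 < c := by
      by_contra h
      exact hj0 (hy0 j0 (by simpa using h))
    have key : x ⬝ᵥ (M *ᵥ x) - c * (x ⬝ᵥ x) = ∑ j, (hM.eigenvalues j - c) * (y j * y j) := by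
      rw [hQx, hdot, Finset.mul_sum, ← Finset.sum_sub_distrib]
      exact Finset.sum_congr rfl fun j _ => by ring
    have hlt : ∑ j, (hM.eigenvalues j - c) * (y j * y j) < ∑ _j : ι, (0:ℝ) := by
      refine Finset.sum_lt_sum (fun j _ => ?_) ⟨j0, Finset.mem_univ j0, ?_⟩
      · by_cases hj : hM.eigenvalues j < c
        · exact mul_nonpos_of_nonpos_of_nonneg (by linarith) (mul_self_nonneg _)
        · rw [hy0 j (by simpa using hj)]; simp
      · have hne : y j0 ≠ 0 := by simpa using hj0
        have : 0 < y j0 * y j0 := mul_self_pos.mpr hne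
        nlinarith
    simp only [Finset.sum_const, smul_zero] at hlt
    linarith

/-- Dimension bound coming from the disjointness of a `≥ c` subspace and a strict `< c`
subspace for the same quadratic form. -/
lemma finrank_add_finrank_le {V W : Submodule ℝ (ι → ℝ)} (Q : (ι → ℝ) → ℝ) (c : ℝ)
    (hV : ∀ x ∈ V, c * (x ⬝ᵥ x) ≤ Q x) (hW : ∀ x ∈ W, x ≠ 0 → Q x < c * (x ⬝ᵥ x)) :
    finrank ℝ V + finrank ℝ W ≤ Fintype.card ι := by
  have hdisj : V ⊓ W = ⊥ := by
    rw [Submodule.eq_bot_iff]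
    intro x hx
    by_contra hx0
    exact absurd (hV x hx.1) (not_le.mpr (hW x hx.2 hx0))
  have h1 := Submodule.finrank_sup_add_finrank_inf_eq V W
  rw [hdisj, finrank_bot] at h1
  have h2 : finrank ℝ ↥(V ⊔ W) ≤ finrank ℝ (ι → ℝ) := Submodule.finrank_le _
  rw [Module.finrank_fintype_fun_eq_card] at h2
  omega

section Prod

variable {κ : Type*} [Fintype κ] [DecidableEq κ]

/-- The linear map extending a vector by zero on the right summand. -/
def inlL (ι κ : Type*) : (ι → ℝ) →ₗ[ℝ] (ι ⊕ κ → ℝ) where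
  toFun a := Sum.elim a 0
  map_add' a b := by funext x; cases x <;> simp
  map_smul' r a := by funext x; cases x <;> simp

/-- The linear map extending a vector by zero on the left summand. -/
def inrL (ι κ : Type*) : (κ → ℝ) →ₗ[ℝ] (ι ⊕ κ → ℝ) where
  toFun b := Sum.elim 0 b
  map_add' a b := by funext x; cases x <;> simp
  map_smul' r a := by funext x; cases x <;> simp

/-- Product of two coordinate subspaces inside functions on a sum type. -/
lemma prod_subspace (V1 : Submodule ℝ (ι → ℝ)) (V2 : Submodule ℝ (κ → ℝ)) :
    ∃ V : Submodule ℝ (ι ⊕ κ → ℝ), finrank ℝ V1 + finrank ℝ V2 ≤ finrank ℝ V ∧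
      ∀ x ∈ V, ∃ a b, a ∈ V1 ∧ b ∈ V2 ∧ x = Sum.elim a b := by
  classical
  have hinl : Function.Injective (inlL ι κ) := by
    intro a b h
    funext i
    exact congrFun h (Sum.inl i)
  have hinr : Function.Injective (inrL ι κ) := by
    intro a b h
    funext i
    exact congrFun h (Sum.inr i)
  refine ⟨V1.map (inlL ι κ) ⊔ V2.map (inrL ι κ), ?_, ?_⟩
  · have h1 : finrank ℝ (V1.map (inlL ι κ)) = finrank ℝ V1 :=
      (LinearEquiv.finrank_eq (Submodule.equivMapOfInjective _ hinl V1)).symm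
    have h2 : finrank ℝ (V2.map (inrL ι κ)) = finrank ℝ V2 :=
      (LinearEquiv.finrank_eq (Submodule.equivMapOfInjective _ hinr V2)).symm
    have hdisj : V1.map (inlL ι κ) ⊓ V2.map (inrL ι κ) = ⊥ := by
      rw [Submodule.eq_bot_iff]
      intro x hx
      obtain ⟨⟨a, -, ha⟩, ⟨b, -, hb⟩⟩ := hx
      funext j
      cases j with
      | inl j => rw [← hb]; simp [inrL]
      | inr j => rw [← ha]; simp [inlL]
    have := Submodule.finrank_sup_add_finrank_inf_eq (V1.map (inlL ι κ)) (V2.map (inrL ι κ))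
    rw [hdisj, finrank_bot, h1, h2] at this
    omega
  · intro x hx
    obtain ⟨u, hu, v, hv, huv⟩ := Submodule.mem_sup.mp hx
    obtain ⟨a, ha, rfl⟩ := hu
    obtain ⟨b, hb, rfl⟩ := hv
    refine ⟨a, b, ha, hb, ?_⟩
    funext j
    cases j with
    | inl j => rw [← huv]; simp [inlL, inrL]
    | inr j => rw [← huv]; simp [inlL, inrL]

end Prod

lemma dot_self_nonneg {κ : Type*} [Fintype κ] (a : κ → ℝ) : (0:ℝ) ≤ a ⬝ᵥ a :=
  Finset.sum_nonneg fun _ _ => mul_self_nonneg _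

/-- Arithmetic-geometric mean style bound on a cross term. -/
lemma cross_bound {κ : Type*} [Fintype κ] (w v : κ → ℝ) (g : ℝ) :
    |2 * (g * (v ⬝ᵥ w))| ≤ w ⬝ᵥ w + g ^ 2 * (v ⬝ᵥ v) := by
  have h1 : (0:ℝ) ≤ (w - g • v) ⬝ᵥ (w - g • v) :=
    Finset.sum_nonneg fun j _ => mul_self_nonneg _
  have h2 : (0:ℝ) ≤ (w + g • v) ⬝ᵥ (w + g • v) :=
    Finset.sum_nonneg fun j _ => mul_self_nonneg _
  simp only [sub_dotProduct, dotProduct_sub, smul_dotProduct, dotProduct_smul,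
    smul_eq_mul] at h1
  simp only [add_dotProduct, dotProduct_add, smul_dotProduct, dotProduct_smul,
    smul_eq_mul] at h2
  have hc : w ⬝ᵥ v = v ⬝ᵥ w := dotProduct_comm _ _
  rw [hc] at h1 h2
  rw [abs_le]
  constructor
  · nlinarith [h2]
  · nlinarith [h1]

lemma countP_ofFn_eq {k : ℕ} (f : Fin k → ℝ) (p : ℝ → Prop) [DecidablePred p] :
    (univ.filter fun j => p (f j)).card = Multiset.countP (fun x => p x) ↑(List.ofFn f) := by
  have h1 : (univ : Finset (Fin k)).val = ↑(List.finRange k) := rfl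
  rw [List.ofFn_eq_map, ← Multiset.map_coe, ← h1, Multiset.countP_map]
  rfl

/-- Transfer of counts through a multiset equality of two enumerations. -/
lemma count_eq_of_multiset {k : ℕ} {α : Type*} [Fintype α] [DecidableEq α]
    (f : Fin k → ℝ) (g : α → ℝ) (e : Fin k ≃ α)
    (h : (↑(List.ofFn f) : Multiset ℝ) = ↑(List.ofFn fun i => g (e i))) (c : ℝ) :
    (univ.filter fun j => c ≤ f j).card = (univ.filter fun a => c ≤ g a).card := by
  rw [countP_ofFn_eq f (fun x => c ≤ x), h, ← countP_ofFn_eq (fun i => g (e i)) (fun x => c ≤ x)]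
  exact Finset.card_equiv e (fun a => by simp)

/-- Quadratic form of a block matrix. -/
lemma quad_fromBlocks {ι κ : Type*} [Fintype ι] [Fintype κ]
    (B1 : Matrix ι ι ℝ) (B12 : Matrix ι κ ℝ) (B21 : Matrix κ ι ℝ) (B2 : Matrix κ κ ℝ)
    (u : ι → ℝ) (v : κ → ℝ) :
    Sum.elim u v ⬝ᵥ (fromBlocks B1 B12 B21 B2 *ᵥ Sum.elim u v) =
      u ⬝ᵥ (B1 *ᵥ u) + u ⬝ᵥ (B12 *ᵥ v) + v ⬝ᵥ (B21 *ᵥ u) + v ⬝ᵥ (B2 *ᵥ v) := by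
  rw [fromBlocks_mulVec]
  simp only [Sum.elim_comp_inl, Sum.elim_comp_inr, sumElim_dotProduct_sumElim,
    dotProduct_add]
  ring

section Count

variable {κ : Type*} [Fintype κ] [DecidableEq κ]

/-- Upper bound on the eigenvalue count of `S` via counts of two "block" matrices. -/
lemma count_le_count_add_count {S : Matrix (ι ⊕ κ) (ι ⊕ κ) ℝ}
    {B1 : Matrix ι ι ℝ} {B2 : Matrix κ κ ℝ}
    (hS : S.IsHermitian) (hB1 : B1.IsHermitian) (hB2 : B2.IsHermitian) (c c1 c2 : ℝ)
    (h : ∀ (u : ι → ℝ) (v : κ → ℝ),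
      Sum.elim u v ⬝ᵥ (S *ᵥ Sum.elim u v) ≤ u ⬝ᵥ (B1 *ᵥ u) + v ⬝ᵥ (B2 *ᵥ v)
        + (c - c1) * (u ⬝ᵥ u) + (c - c2) * (v ⬝ᵥ v)) :
    (univ.filter fun j => c ≤ hS.eigenvalues j).card ≤
      (univ.filter fun j => c1 ≤ hB1.eigenvalues j).card +
      (univ.filter fun j => c2 ≤ hB2.eigenvalues j).card := by
  classical
  obtain ⟨V, hVd, hVq⟩ := ge_subspace hS c
  obtain ⟨W1, hW1d, hW1q⟩ := lt_subspace hB1 c1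
  obtain ⟨W2, hW2d, hW2q⟩ := lt_subspace hB2 c2
  obtain ⟨W, hWd, hWq⟩ := prod_subspace W1 W2
  have hW : ∀ x ∈ W, x ≠ 0 → x ⬝ᵥ (S *ᵥ x) < c * (x ⬝ᵥ x) := by
    intro x hx hx0
    obtain ⟨a, b, ha, hb, rfl⟩ := hWq x hx
    have hdot : Sum.elim a b ⬝ᵥ Sum.elim a b = a ⬝ᵥ a + b ⬝ᵥ b :=
      sumElim_dotProduct_sumElim _ _ _ _
    have hab : a ≠ 0 ∨ b ≠ 0 := by
      by_contra hcon
      push_neg at hcon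
      exact hx0 (by rw [hcon.1, hcon.2]; funext j; cases j <;> simp)
    have key := h a b
    have hana : (0:ℝ) ≤ a ⬝ᵥ a := dot_self_nonneg a
    have hbnb : (0:ℝ) ≤ b ⬝ᵥ b := dot_self_nonneg b
    rcases hab with ha0 | hb0
    · have hs1 : a ⬝ᵥ (B1 *ᵥ a) < c1 * (a ⬝ᵥ a) := hW1q a ha ha0
      have hs2 : b ⬝ᵥ (B2 *ᵥ b) ≤ c2 * (b ⬝ᵥ b) := by
        rcases eq_or_ne b 0 with rfl | hb0
        · simp
        · exact (hW2q b hb hb0).le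
      rw [hdot]; nlinarith
    · have hs1 : a ⬝ᵥ (B1 *ᵥ a) ≤ c1 * (a ⬝ᵥ a) := by
        rcases eq_or_ne a 0 with rfl | ha0
        · simp
        · exact (hW1q a ha ha0).le
      have hs2 : b ⬝ᵥ (B2 *ᵥ b) < c2 * (b ⬝ᵥ b) := hW2q b hb hb0
      rw [hdot]; nlinarith
  have main := finrank_add_finrank_le (fun x => x ⬝ᵥ (S *ᵥ x)) c hVq hW
  rw [Fintype.card_sum] at main
  omega

end Count

section Count2

variable {κ : Type*} [Fintype κ] [DecidableEq κ]

/-- Lower bound on the eigenvalue count of `S` via counts of two "block" matrices. -/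
lemma count_add_count_le_count {S : Matrix (ι ⊕ κ) (ι ⊕ κ) ℝ}
    {B1 : Matrix ι ι ℝ} {B2 : Matrix κ κ ℝ}
    (hS : S.IsHermitian) (hB1 : B1.IsHermitian) (hB2 : B2.IsHermitian) (c c1 c2 : ℝ)
    (h : ∀ (u : ι → ℝ) (v : κ → ℝ),
      u ⬝ᵥ (B1 *ᵥ u) + v ⬝ᵥ (B2 *ᵥ v) + (c - c1) * (u ⬝ᵥ u) + (c - c2) * (v ⬝ᵥ v)
        ≤ Sum.elim u v ⬝ᵥ (S *ᵥ Sum.elim u v)) :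
    (univ.filter fun j => c1 ≤ hB1.eigenvalues j).card +
      (univ.filter fun j => c2 ≤ hB2.eigenvalues j).card ≤
      (univ.filter fun j => c ≤ hS.eigenvalues j).card := by
  classical
  obtain ⟨V1, hV1d, hV1q⟩ := ge_subspace hB1 c1
  obtain ⟨V2, hV2d, hV2q⟩ := ge_subspace hB2 c2
  obtain ⟨V, hVd, hVq⟩ := prod_subspace V1 V2
  obtain ⟨W, hWd, hWq⟩ := lt_subspace hS c
  have hV : ∀ x ∈ V, c * (x ⬝ᵥ x) ≤ x ⬝ᵥ (S *ᵥ x) := by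
    intro x hx
    obtain ⟨a, b, ha, hb, rfl⟩ := hVq x hx
    have hdot : Sum.elim a b ⬝ᵥ Sum.elim a b = a ⬝ᵥ a + b ⬝ᵥ b :=
      sumElim_dotProduct_sumElim _ _ _ _
    have key := h a b
    have hs1 := hV1q a ha
    have hs2 := hV2q b hb
    rw [hdot]
    nlinarith
  have main := finrank_add_finrank_le (fun x => x ⬝ᵥ (S *ᵥ x)) c hV hWq
  rw [Fintype.card_sum] at main
  have hcs : Fintype.card (ι ⊕ κ) = Fintype.card ι + Fintype.card κ := Fintype.card_sum
  omega

end Count2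

open scoped Matrix.Norms.L2Operator

/-- The squared Euclidean norm of `E1 *ᵥ u` is controlled by the operator norm of the
embedding of `E1` as an off-diagonal block. -/
lemma offdiag_block_norm_bound {n m : ℕ} (E1 : Matrix (Fin m) (Fin n) ℝ)
    (E : Matrix (Fin n ⊕ Fin m) (Fin n ⊕ Fin m) ℝ)
    (hE : E = Matrix.fromBlocks 0 E1.transpose E1 0) (u : Fin n → ℝ) :
    (E1 *ᵥ u) ⬝ᵥ (E1 *ᵥ u) ≤ ‖E‖ ^ 2 * (u ⬝ᵥ u) := by
  classical
  have hnorm_sq : ∀ (ι : Type) [Fintype ι] (z : ι → ℝ),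
      ‖(EuclideanSpace.equiv ι ℝ).symm z‖ ^ 2 = z ⬝ᵥ z := by
    intro ι _ z
    rw [← real_inner_self_eq_norm_sq]
    simp only [PiLp.inner_apply, RCLike.inner_apply, conj_trivial]
    rfl
  set x : EuclideanSpace ℝ (Fin n ⊕ Fin m) :=
    (EuclideanSpace.equiv (Fin n ⊕ Fin m) ℝ).symm (Sum.elim u 0) with hx
  have hb := Matrix.l2_opNorm_mulVec E x
  have hmv : E *ᵥ (x : (Fin n ⊕ Fin m) → ℝ) = Sum.elim (0 : Fin n → ℝ) (E1 *ᵥ u) := by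
    have hxfun : (x : (Fin n ⊕ Fin m) → ℝ) = Sum.elim u 0 := rfl
    rw [hxfun, hE, Matrix.fromBlocks_mulVec]
    simp
  rw [hmv] at hb
  have h1 : ‖(EuclideanSpace.equiv (Fin n ⊕ Fin m) ℝ).symm (Sum.elim 0 (E1 *ᵥ u))‖ ^ 2
      = (E1 *ᵥ u) ⬝ᵥ (E1 *ᵥ u) := by
    rw [hnorm_sq _ (Sum.elim (0 : Fin n → ℝ) (E1 *ᵥ u))]
    rw [sumElim_dotProduct_sumElim]
    simp
  have h2 : ‖x‖ ^ 2 = u ⬝ᵥ u := by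
    rw [hx, hnorm_sq _ (Sum.elim u (0 : Fin m → ℝ))]
    rw [sumElim_dotProduct_sumElim]
    simp
  have hsq : ‖(EuclideanSpace.equiv (Fin n ⊕ Fin m) ℝ).symm (Sum.elim 0 (E1 *ᵥ u))‖ ^ 2
      ≤ (‖E‖ * ‖x‖) ^ 2 := by
    apply pow_le_pow_left₀ (norm_nonneg _) hb
  rw [h1, mul_pow, h2] at hsq
  exact hsq

end QuadPerturbAux

open Matrix Finset Module

/-- Quadratic residual eigenvalue perturbation bound for a symmetric block-diagonal
matrix `A = [[A1,0],[0,A2]]` perturbed by an off-diagonal symmetric `E = [[0,E1ᵀ],[E1,0]]`.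
If the `i`-th (decreasingly ordered) eigenvalue of `A` is an eigenvalue of `A1` whose
distance to the spectrum of `A2` is at least `gap > 0`, then
`|λ_i(A) - λ_i(A+E)| ≤ ‖E‖² / gap`. -/
theorem quadratic_eigenvalue_perturbation
    {n m : ℕ}
    (A1 : Matrix (Fin n) (Fin n) ℝ) (A2 : Matrix (Fin m) (Fin m) ℝ)
    (E1 : Matrix (Fin m) (Fin n) ℝ)
    (hA1 : A1.IsHermitian) (hA2 : A2.IsHermitian)
    (A E : Matrix (Fin n ⊕ Fin m) (Fin n ⊕ Fin m) ℝ)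
    (hA : A = Matrix.fromBlocks A1 0 0 A2)
    (hE : E = Matrix.fromBlocks 0 E1.transpose E1 0)
    (hAH : A.IsHermitian) (hAEH : (A + E).IsHermitian)
    -- `μ` and `ν` are the decreasingly ordered eigenvalues of `A` and `A + E`
    (μ ν : Fin (n + m) → ℝ)
    (hμanti : Antitone μ) (hνanti : Antitone ν)
    (e : Fin (n + m) ≃ (Fin n ⊕ Fin m))
    (hμ : Multiset.ofList (List.ofFn μ) =
      Multiset.ofList (List.ofFn fun i => hAH.eigenvalues (e i)))
    (hν : Multiset.ofList (List.ofFn ν) =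
      Multiset.ofList (List.ofFn fun i => hAEH.eigenvalues (e i)))
    (i : Fin (n + m))
    -- `μ i` is an eigenvalue of `A1`
    (hiA1 : ∃ v : Fin n → ℝ, v ≠ 0 ∧ A1.mulVec v = μ i • v)
    -- `gap` is (a lower bound for) the distance of `μ i` to the spectrum of `A2`
    (gap : ℝ) (hgap : 0 < gap)
    (hdist : ∀ j : Fin m, gap ≤ |μ i - hA2.eigenvalues j|) :
    |μ i - ν i| ≤ ‖E‖ ^ 2 / gap := by
  classical
  have hQA : ∀ (u : Fin n → ℝ) (v : Fin m → ℝ),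
      Sum.elim u v ⬝ᵥ (A *ᵥ Sum.elim u v) = u ⬝ᵥ (A1 *ᵥ u) + v ⬝ᵥ (A2 *ᵥ v) := by
    intro u v
    rw [hA, quad_fromBlocks]
    simp
  have hcrossE : ∀ (u : Fin n → ℝ) (v : Fin m → ℝ), u ⬝ᵥ (E1ᵀ *ᵥ v) = v ⬝ᵥ (E1 *ᵥ u) := by
    intro u v
    rw [mulVec_transpose, dotProduct_comm, dotProduct_mulVec]
  have hQAE : ∀ (u : Fin n → ℝ) (v : Fin m → ℝ),
      Sum.elim u v ⬝ᵥ ((A + E) *ᵥ Sum.elim u v)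
        = u ⬝ᵥ (A1 *ᵥ u) + v ⬝ᵥ (A2 *ᵥ v) + 2 * (v ⬝ᵥ (E1 *ᵥ u)) := by
    intro u v
    rw [add_mulVec, dotProduct_add, hQA u v, hE, quad_fromBlocks]
    simp only [Matrix.zero_mulVec, dotProduct_zero, zero_add, add_zero]
    rw [hcrossE u v]
    ring
  set t := ‖E‖ ^ 2 / gap with ht
  have ht0 : 0 ≤ t := div_nonneg (by positivity) hgap.le
  have htgap : gap * t = ‖E‖ ^ 2 := by rw [ht]; field_simp
  have hcross : ∀ (u : Fin n → ℝ) (v : Fin m → ℝ),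
      |2 * (v ⬝ᵥ (E1 *ᵥ u))| ≤ t * (u ⬝ᵥ u) + gap * (v ⬝ᵥ v) := by
    intro u v
    have hb := cross_bound (E1 *ᵥ u) v gap
    rw [show (2:ℝ) * (gap * (v ⬝ᵥ (E1 *ᵥ u))) = gap * (2 * (v ⬝ᵥ (E1 *ᵥ u))) by ring,
      abs_mul, abs_of_pos hgap] at hb
    have hEd := offdiag_block_norm_bound E1 E hE u
    have heq : ‖E‖ ^ 2 * (u ⬝ᵥ u) = gap * (t * (u ⬝ᵥ u)) := by rw [← htgap]; ring
    have hkey : gap * |2 * (v ⬝ᵥ (E1 *ᵥ u))| ≤ gap * (t * (u ⬝ᵥ u) + gap * (v ⬝ᵥ v)) := by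
      rw [mul_add]
      nlinarith [hb, hEd, heq]
    exact le_of_mul_le_mul_left hkey hgap
  have hμc : ∀ c : ℝ, (univ.filter fun j => c ≤ μ j).card
      = (univ.filter fun a => c ≤ hAH.eigenvalues a).card :=
    fun c => count_eq_of_multiset μ _ e hμ c
  have hνc : ∀ c : ℝ, (univ.filter fun j => c ≤ ν j).card
      = (univ.filter fun a => c ≤ hAEH.eigenvalues a).card :=
    fun c => count_eq_of_multiset ν _ e hν c
  have hblock : ∀ c : ℝ, (univ.filter fun a => c ≤ hAH.eigenvalues a).card
      = (univ.filter fun j => c ≤ hA1.eigenvalues j).card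
        + (univ.filter fun j => c ≤ hA2.eigenvalues j).card := by
    intro c
    apply le_antisymm
    · apply count_le_count_add_count hAH hA1 hA2 c c c
      intro u v
      rw [hQA u v]
      simp
    · apply count_add_count_le_count hAH hA1 hA2 c c c
      intro u v
      rw [hQA u v]
      simp
  have hIic : ∀ (c : ℝ) (w : Fin (n + m) → ℝ), Antitone w → c ≤ w i →
      (i : ℕ) + 1 ≤ (univ.filter fun j => c ≤ w j).card := by
    intro c w hw hci
    have hsub : Finset.Iic i ⊆ univ.filter fun j => c ≤ w j := by
      intro j hj
      simp only [Finset.mem_Iic] at hj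
      simp only [Finset.mem_filter, Finset.mem_univ, true_and]
      exact le_trans hci (hw hj)
    simpa [Fin.card_Iic] using Finset.card_le_card hsub
  have hIio : ∀ (c : ℝ) (w : Fin (n + m) → ℝ), Antitone w → w i < c →
      (univ.filter fun j => c ≤ w j).card ≤ (i : ℕ) := by
    intro c w hw hci
    have hsub : (univ.filter fun j => c ≤ w j) ⊆ Finset.Iio i := by
      intro j hj
      simp only [Finset.mem_filter, Finset.mem_univ, true_and] at hj
      simp only [Finset.mem_Iio]
      by_contra hij
      push_neg at hij
      exact absurd hj (by linarith [hw hij])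
    simpa [Fin.card_Iio] using Finset.card_le_card hsub
  have hub : ν i ≤ μ i + t := by
    by_contra hcon
    push_neg at hcon
    have h1 : (i : ℕ) + 1 ≤ (univ.filter fun j => ν i ≤ ν j).card := hIic (ν i) ν hνanti le_rfl
    rw [hνc (ν i)] at h1
    have h2 : (univ.filter fun a => ν i ≤ hAEH.eigenvalues a).card ≤
        (univ.filter fun j => ν i - t ≤ hA1.eigenvalues j).card
          + (univ.filter fun j => ν i - gap ≤ hA2.eigenvalues j).card := by
      apply count_le_count_add_count hAEH hA1 hA2 (ν i) (ν i - t) (ν i - gap)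
      intro u v
      rw [hQAE u v]
      have hc2 := (abs_le.mp (hcross u v)).2
      linarith
    set γ := min (ν i - t) (μ i + gap) with hγ
    have hγμ : μ i < γ := lt_min (by linarith) (by linarith)
    have h3 : (univ.filter fun j => ν i - t ≤ hA1.eigenvalues j).card ≤
        (univ.filter fun j => γ ≤ hA1.eigenvalues j).card := by
      apply Finset.card_le_card
      intro j hj
      simp only [Finset.mem_filter, Finset.mem_univ, true_and] at hj ⊢
      exact le_trans (min_le_left _ _) hj
    have h4 : (univ.filter fun j => ν i - gap ≤ hA2.eigenvalues j).card ≤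
        (univ.filter fun j => γ ≤ hA2.eigenvalues j).card := by
      apply Finset.card_le_card
      intro j hj
      simp only [Finset.mem_filter, Finset.mem_univ, true_and] at hj ⊢
      have hd := hdist j
      have h5 : μ i - gap < hA2.eigenvalues j := by linarith
      have h6 : μ i + gap ≤ hA2.eigenvalues j := by
        rcases abs_cases (μ i - hA2.eigenvalues j) with ⟨habs, -⟩ | ⟨habs, -⟩ <;> linarith
      exact le_trans (min_le_right _ _) h6
    have h7 := (hblock γ).symm
    have h8 := (hμc γ).symm
    have h9 : (univ.filter fun j => γ ≤ μ j).card ≤ (i : ℕ) := hIio γ μ hμanti hγμ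
    omega
  have hlb : μ i - t ≤ ν i := by
    by_contra hcon
    push_neg at hcon
    have h1 : (i : ℕ) + 1 ≤ (univ.filter fun j => μ i ≤ μ j).card := hIic (μ i) μ hμanti le_rfl
    rw [hμc (μ i), hblock (μ i)] at h1
    have h2 : (univ.filter fun j => μ i ≤ hA2.eigenvalues j)
        = (univ.filter fun j => μ i + gap ≤ hA2.eigenvalues j) := by
      apply Finset.filter_congr
      intro j _
      constructor
      · intro hj
        have hd := hdist j
        rcases abs_cases (μ i - hA2.eigenvalues j) with ⟨habs, -⟩ | ⟨habs, -⟩ <;> linarith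
      · intro hj
        linarith
    rw [h2] at h1
    have h3 : (univ.filter fun j => μ i ≤ hA1.eigenvalues j).card
        + (univ.filter fun j => μ i + gap ≤ hA2.eigenvalues j).card ≤
        (univ.filter fun a => μ i - t ≤ hAEH.eigenvalues a).card := by
      apply count_add_count_le_count hAEH hA1 hA2 (μ i - t) (μ i) (μ i + gap)
      intro u v
      rw [hQAE u v]
      have hc1 := (abs_le.mp (hcross u v)).1
      have hvv := dot_self_nonneg v
      nlinarith [mul_nonneg ht0 hvv]
    have h4 := (hνc (μ i - t)).symm
    have h5 : (univ.filter fun j => μ i - t ≤ ν j).card ≤ (i : ℕ) :=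
      hIio _ ν hνanti (by linarith)
    omega
  rw [abs_le]
  exact ⟨by linarith, by linarith⟩
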